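/- arXiv:2304.13200 — 2 statements merged into one kernel-verified Lean document; each statement's English description precedes it below -/
import Mathlib

section
/- The optimal value of the following semidefinite program equals 3/4: maximize (1/2)⟨φ₀|σ₀|φ₀⟩ + (1/2)⟨φ₁|σ₁|φ₁⟩ over density matrices σ₀, σ₁ on ℂ³ ⊗ ℂ³ subject to the single constraint Tr_A(σ₀) = Tr_A(σ₁) (equal partial traces over the first qutrit factor). Moreover, the optimum is attained by feasible σ₀, σ₁ whose common marginal Tr_A(σ_y) equals the diagonal matrix diag(1/6, 1/6, 2/3). (This is the optimal cheating probability of Alice in the qutrit bit-commitment protocol.) -/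
/-!
STATEMENT 0: The optimal value of Alice's cheating SDP in the qutrit
bit-commitment protocol equals 3/4, attained with common marginal
diag(1/6, 1/6, 2/3).
-/

open Matrix
open scoped Matrix BigOperators ComplexOrder

noncomputable section

/-- Square matrices over ℂ indexed by `α`. -/
abbrev Mat (α : Type) : Type := Matrix α α ℂ

/-- A density matrix: positive semidefinite with unit trace. -/
def IsDensity {α : Type} [Fintype α] [DecidableEq α] (ρ : Mat α) : Prop :=
  ρ.PosSemidef ∧ ρ.trace = 1

/-- Hilbert–Schmidt inner product ⟨P, Q⟩ = Tr(P† Q). -/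
def hs {α : Type} [Fintype α] (P Q : Mat α) : ℂ := (Pᴴ * Q).trace

/-- Outer product |v⟩⟨v|. -/
def outer {α : Type} (v : α → ℂ) : Mat α := fun i j => v i * star (v j)

/-- Standard basis vector |i⟩. -/
def ket {α : Type} [DecidableEq α] (i : α) : α → ℂ := fun j => if j = i then 1 else 0

/-- The embedding of Fin 2 into Fin 3. -/
def f23 (y : Fin 2) : Fin 3 := ⟨y.val, by omega⟩

/-- |φ_y⟩ = (|yy⟩ + |22⟩)/√2 ∈ ℂ³ ⊗ ℂ³. -/
def phi (y : Fin 2) : Fin 3 × Fin 3 → ℂ :=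
  fun p => (ket (f23 y, f23 y) p + ket ((2 : Fin 3), (2 : Fin 3)) p) / (Real.sqrt 2 : ℂ)

/-- Partial trace over the first tensor factor. -/
def ptrA {α β : Type} [Fintype α] (ρ : Mat (α × β)) : Mat β :=
  fun b b' => ∑ a, ρ (a, b) (a, b')

/-! ### Auxiliary lemmas -/

lemma BC_h2 : (Real.sqrt 2 : ℂ) * (Real.sqrt 2 : ℂ) = 2 := by
  rw [← Complex.ofReal_mul, Real.mul_self_sqrt (by norm_num)]; norm_num

lemma BC_h6 : (Real.sqrt 6 : ℂ) * (Real.sqrt 6 : ℂ) = 6 := by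
  rw [← Complex.ofReal_mul, Real.mul_self_sqrt (by norm_num)]; norm_num

lemma BC_hs_outer {α : Type} [Fintype α] (v : α → ℂ) (σ : Mat α) :
    hs (outer v) σ = star v ⬝ᵥ (σ *ᵥ v) := by
  simp only [hs, outer, trace, Matrix.mul_apply, conjTranspose_apply, dotProduct, mulVec,
    diag_apply, star_mul', star_star, Pi.star_apply, Finset.mul_sum, Finset.sum_mul]
  rw [Finset.sum_comm]
  apply Finset.sum_congr rfl; intro i _
  apply Finset.sum_congr rfl; intro j _
  ring

lemma BC_outer_posSemidef {α : Type} [Fintype α] [DecidableEq α] (v : α → ℂ) :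
    (outer v).PosSemidef := by
  refine posSemidef_iff_dotProduct_mulVec.mpr ⟨?_, ?_⟩
  · ext i j; simp [outer, conjTranspose_apply, mul_comm]
  · intro x
    have : star x ⬝ᵥ (outer v *ᵥ x) = star (star v ⬝ᵥ x) * (star v ⬝ᵥ x) := by
      simp only [outer, dotProduct, mulVec, Pi.star_apply, star_sum, star_mul', star_star,
        Finset.mul_sum, Finset.sum_mul]
      rw [Finset.sum_comm]
      apply Finset.sum_congr rfl; intro i _
      apply Finset.sum_congr rfl; intro j _
      ring
    rw [this]
    exact star_mul_self_nonneg _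

/-- The purification vector ψ = (|00⟩ + |11⟩ + 2|22⟩)/√6. -/
def BC_psi : Fin 3 × Fin 3 → ℂ :=
  fun p => (ket ((0:Fin 3),(0:Fin 3)) p + ket ((1:Fin 3),(1:Fin 3)) p
    + 2 * ket ((2:Fin 3),(2:Fin 3)) p) / (Real.sqrt 6 : ℂ)

lemma BC_psi_trace : (outer BC_psi).trace = 1 := by
  simp only [trace, diag_apply, outer, BC_psi, ket, Fintype.sum_prod_type, Fin.sum_univ_three]
  norm_num [Fin.ext_iff, Prod.ext_iff]
  field_simp
  linear_combination (-1 : ℂ) * BC_h6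

lemma BC_psi_ptrA : ptrA (outer BC_psi) = Matrix.diagonal ![(1/6 : ℂ), 1/6, 2/3] := by
  ext b b'
  fin_cases b <;> fin_cases b' <;>
    simp only [ptrA, outer, BC_psi, ket, Fin.sum_univ_three, Matrix.diagonal, Matrix.cons_val',
      Matrix.cons_val_zero, Matrix.cons_val_one, Matrix.head_cons, Matrix.of_apply] <;>
    norm_num [Fin.ext_iff, Prod.ext_iff] <;>
    field_simp <;>
    first
      | linear_combination BC_h6
      | linear_combination (-1:ℂ) * BC_h6
      | linear_combination (-2:ℂ) * BC_h6
      | linear_combination (-3:ℂ) * BC_h6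
      | linear_combination (-4:ℂ) * BC_h6
      | linear_combination (2:ℂ) * BC_h6
      | linear_combination (3:ℂ) * BC_h6
      | linear_combination (4:ℂ) * BC_h6

lemma BC_key_dot (y : Fin 2) :
    (star (phi y) ⬝ᵥ BC_psi) * (star BC_psi ⬝ᵥ phi y) = 3/4 := by
  have s2ne : (Real.sqrt 2 : ℂ) ≠ 0 := by
    simpa using Real.sqrt_ne_zero'.2 (by norm_num : (0:ℝ) < 2)
  have s6ne : (Real.sqrt 6 : ℂ) ≠ 0 := by
    simpa using Real.sqrt_ne_zero'.2 (by norm_num : (0:ℝ) < 6)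
  have hA : star (phi y) ⬝ᵥ BC_psi = 3 / ((Real.sqrt 2 : ℂ) * (Real.sqrt 6 : ℂ)) := by
    fin_cases y <;>
      simp only [dotProduct, Pi.star_apply, phi, BC_psi, ket, f23, Fintype.sum_prod_type,
        Fin.sum_univ_three] <;>
      norm_num [Fin.ext_iff, Prod.ext_iff, star_div₀] <;>
      field_simp <;> ring
  have hB : star BC_psi ⬝ᵥ phi y = 3 / ((Real.sqrt 2 : ℂ) * (Real.sqrt 6 : ℂ)) := by
    fin_cases y <;>
      simp only [dotProduct, Pi.star_apply, phi, BC_psi, ket, f23, Fintype.sum_prod_type,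
        Fin.sum_univ_three] <;>
      norm_num [Fin.ext_iff, Prod.ext_iff, star_div₀] <;>
      field_simp <;> ring
  rw [hA, hB, div_mul_div_comm]
  have h12 : ((Real.sqrt 2 : ℂ) * (Real.sqrt 6 : ℂ)) * ((Real.sqrt 2 : ℂ) * (Real.sqrt 6 : ℂ))
      = 12 := by
    calc ((Real.sqrt 2 : ℂ) * (Real.sqrt 6 : ℂ)) * ((Real.sqrt 2 : ℂ) * (Real.sqrt 6 : ℂ))
        = ((Real.sqrt 2 : ℂ) * (Real.sqrt 2 : ℂ)) * ((Real.sqrt 6 : ℂ) * (Real.sqrt 6 : ℂ)) := by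
          ring
      _ = 12 := by rw [BC_h2, BC_h6]; norm_num
  rw [h12]; norm_num

lemma BC_psi_value (y : Fin 2) : hs (outer (phi y)) (outer BC_psi) = 3/4 := by
  rw [BC_hs_outer]
  have h1 : (outer BC_psi *ᵥ phi y) = fun i => BC_psi i * (star BC_psi ⬝ᵥ phi y) := by
    ext i; simp only [outer, mulVec, dotProduct, Pi.star_apply, Finset.mul_sum]
    apply Finset.sum_congr rfl; intro j _; ring
  rw [h1]
  have h2' : star (phi y) ⬝ᵥ (fun i => BC_psi i * (star BC_psi ⬝ᵥ phi y))
      = (star (phi y) ⬝ᵥ BC_psi) * (star BC_psi ⬝ᵥ phi y) := by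
    simp only [dotProduct, Finset.sum_mul]
    apply Finset.sum_congr rfl; intro j _; ring
  rw [h2', BC_key_dot]

lemma BC_hs_phi0 (σ : Mat (Fin 3 × Fin 3)) :
    hs (outer (phi 0)) σ =
      (σ (0,0) (0,0) + σ (0,0) (2,2) + σ (2,2) (0,0) + σ (2,2) (2,2)) / 2 := by
  rw [BC_hs_outer]
  simp only [phi, ket, f23, dotProduct, mulVec, Pi.star_apply, Fintype.sum_prod_type,
    Fin.sum_univ_three]
  norm_num [Fin.ext_iff, Prod.ext_iff, star_div₀]
  field_simp
  linear_combination (-(σ (0,0) (0,0)) - σ (0,0) (2,2) - σ (2,2) (0,0) - σ (2,2) (2,2)) * BC_h2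

lemma BC_hs_phi1 (σ : Mat (Fin 3 × Fin 3)) :
    hs (outer (phi 1)) σ =
      (σ (1,1) (1,1) + σ (1,1) (2,2) + σ (2,2) (1,1) + σ (2,2) (2,2)) / 2 := by
  rw [BC_hs_outer]
  simp only [phi, ket, f23, dotProduct, mulVec, Pi.star_apply, Fintype.sum_prod_type,
    Fin.sum_univ_three]
  norm_num [Fin.ext_iff, Prod.ext_iff, star_div₀]
  field_simp
  linear_combination (-(σ (1,1) (1,1)) - σ (1,1) (2,2) - σ (2,2) (1,1) - σ (2,2) (2,2)) * BC_h2

lemma BC_quad_nonneg (σ : Mat (Fin 3 × Fin 3)) (hσ : σ.PosSemidef)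
    (p q : Fin 3 × Fin 3) :
    0 ≤ (4 * σ p p - 2 * σ p q - 2 * σ q p + σ q q : ℂ) := by
  have h := hσ.dotProduct_mulVec_nonneg (fun r => 2 * ket p r - ket q r)
  have he : star (fun r => 2 * ket p r - ket q r) ⬝ᵥ
      (σ *ᵥ fun r => 2 * ket p r - ket q r)
      = 4 * σ p p - 2 * σ p q - 2 * σ q p + σ q q := by
    have hst : (star (fun r => 2 * ket p r - ket q r) : (Fin 3 × Fin 3) → ℂ)
        = fun r => 2 * ket p r - ket q r := by
      ext r
      simp [ket, apply_ite (star : ℂ → ℂ)]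
    rw [hst]
    simp only [dotProduct, mulVec, ket, mul_ite, ite_mul, mul_one, mul_zero, one_mul,
      zero_mul, sub_mul, mul_sub, Finset.mul_sum]
    simp [Finset.sum_ite_eq, Finset.sum_sub_distrib, Finset.mul_sum]
    ring
  rw [he] at h
  exact h

lemma BC_diag_nonneg (σ : Mat (Fin 3 × Fin 3)) (hσ : σ.PosSemidef) (p : Fin 3 × Fin 3) :
    0 ≤ σ p p := by
  have h := hσ.dotProduct_mulVec_nonneg (ket p)
  have he : star (ket p) ⬝ᵥ (σ *ᵥ ket p) = σ p p := by
    have hst : (star (ket p) : (Fin 3 × Fin 3) → ℂ) = ket p := by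
      ext r; simp [ket, apply_ite (star : ℂ → ℂ)]
    rw [hst]
    simp only [dotProduct, mulVec, ket, ite_mul, mul_ite, one_mul, zero_mul, mul_one, mul_zero]
    simp [Finset.sum_ite_eq]
  rwa [he] at h

lemma BC_upper (σ0 σ1 : Mat (Fin 3 × Fin 3))
    (h0 : IsDensity σ0) (h1 : IsDensity σ1) (hc : ptrA σ0 = ptrA σ1) :
    ((1/2 : ℂ) * hs (outer (phi 0)) σ0 + (1/2 : ℂ) * hs (outer (phi 1)) σ1).re ≤ 3/4 := by
  -- trace conditions expanded
  have htr0 := h0.2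
  have htr1 := h1.2
  simp only [trace, diag_apply, Fintype.sum_prod_type, Fin.sum_univ_three] at htr0 htr1
  -- marginal conditions
  have hm0 : σ0 ((0:Fin 3),(0:Fin 3)) (0,0) + σ0 (1,0) (1,0) + σ0 (2,0) (2,0)
      = σ1 ((0:Fin 3),(0:Fin 3)) (0,0) + σ1 (1,0) (1,0) + σ1 (2,0) (2,0) := by
    have := congrFun (congrFun hc 0) 0
    simpa [ptrA, Fin.sum_univ_three] using this
  have hm1 : σ0 ((0:Fin 3),(1:Fin 3)) (0,1) + σ0 (1,1) (1,1) + σ0 (2,1) (2,1)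
      = σ1 ((0:Fin 3),(1:Fin 3)) (0,1) + σ1 (1,1) (1,1) + σ1 (2,1) (2,1) := by
    have := congrFun (congrFun hc 1) 1
    simpa [ptrA, Fin.sum_univ_three] using this
  -- the dual certificate identity
  set N : ℂ :=
      (1/8) * (4 * σ0 (0,0) (0,0) - 2 * σ0 (0,0) (2,2) - 2 * σ0 (2,2) (0,0) + σ0 (2,2) (2,2))
    + (1/8) * (4 * σ1 (1,1) (1,1) - 2 * σ1 (1,1) (2,2) - 2 * σ1 (2,2) (1,1) + σ1 (2,2) (2,2))
    + (3/4) * (σ0 (1,0) (1,0) + σ0 (2,0) (2,0) + σ1 (0,1) (0,1) + σ1 (2,1) (2,1))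
    + (3/8) * (σ0 (0,2) (0,2) + σ0 (1,2) (1,2) + σ1 (0,2) (0,2) + σ1 (1,2) (1,2)) with hN
  have hkey : (1/2 : ℂ) * hs (outer (phi 0)) σ0 + (1/2 : ℂ) * hs (outer (phi 1)) σ1
      = 3/4 - N := by
    rw [BC_hs_phi0, BC_hs_phi1, hN]
    linear_combination (3/8 : ℂ) * htr0 + (3/8 : ℂ) * htr1
      + (3/8 : ℂ) * hm0 - (3/8 : ℂ) * hm1
  have hNpos : 0 ≤ N := by
    rw [hN]
    have c18 : (0:ℂ) ≤ 1/8 := by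
      rw [Complex.le_def]; norm_num
    have c34 : (0:ℂ) ≤ 3/4 := by
      rw [Complex.le_def]; norm_num
    have c38 : (0:ℂ) ≤ 3/8 := by
      rw [Complex.le_def]; norm_num
    have q0 := BC_quad_nonneg σ0 h0.1 (0,0) (2,2)
    have q1 := BC_quad_nonneg σ1 h1.1 (1,1) (2,2)
    have d1 := BC_diag_nonneg σ0 h0.1 (1,0)
    have d2 := BC_diag_nonneg σ0 h0.1 (2,0)
    have d3 := BC_diag_nonneg σ1 h1.1 (0,1)
    have d4 := BC_diag_nonneg σ1 h1.1 (2,1)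
    have d5 := BC_diag_nonneg σ0 h0.1 (0,2)
    have d6 := BC_diag_nonneg σ0 h0.1 (1,2)
    have d7 := BC_diag_nonneg σ1 h1.1 (0,2)
    have d8 := BC_diag_nonneg σ1 h1.1 (1,2)
    have : (0:ℂ) ≤ σ0 (1,0) (1,0) + σ0 (2,0) (2,0) + σ1 (0,1) (0,1) + σ1 (2,1) (2,1) := by
      exact add_nonneg (add_nonneg (add_nonneg d1 d2) d3) d4
    have h2 : (0:ℂ) ≤ σ0 (0,2) (0,2) + σ0 (1,2) (1,2) + σ1 (0,2) (0,2) + σ1 (1,2) (1,2) := by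
      exact add_nonneg (add_nonneg (add_nonneg d5 d6) d7) d8
    exact add_nonneg (add_nonneg (add_nonneg (mul_nonneg c18 q0) (mul_nonneg c18 q1))
      (mul_nonneg c34 this)) (mul_nonneg c38 h2)
  rw [hkey]
  have : (0:ℝ) ≤ N.re := by
    have := (Complex.le_def.mp hNpos).1
    simpa using this
  simp only [Complex.sub_re]
  norm_num [Complex.div_re]
  linarith [this]

theorem bit_commitment_cheating_Alice :
    IsGreatest
      {x : ℝ | ∃ σ0 σ1 : Mat (Fin 3 × Fin 3),
        IsDensity σ0 ∧ IsDensity σ1 ∧ ptrA σ0 = ptrA σ1 ∧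
        x = ((1/2 : ℂ) * hs (outer (phi 0)) σ0
            + (1/2 : ℂ) * hs (outer (phi 1)) σ1).re}
      (3/4)
    ∧ ∃ σ0 σ1 : Mat (Fin 3 × Fin 3),
        IsDensity σ0 ∧ IsDensity σ1 ∧ ptrA σ0 = ptrA σ1 ∧
        ptrA σ0 = Matrix.diagonal ![(1/6 : ℂ), 1/6, 2/3] ∧
        ((1/2 : ℂ) * hs (outer (phi 0)) σ0
          + (1/2 : ℂ) * hs (outer (phi 1)) σ1).re = 3/4 := by
  have hdens : IsDensity (outer BC_psi) := ⟨BC_outer_posSemidef _, BC_psi_trace⟩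
  have hval : ((1/2 : ℂ) * hs (outer (phi 0)) (outer BC_psi)
      + (1/2 : ℂ) * hs (outer (phi 1)) (outer BC_psi)).re = 3/4 := by
    rw [BC_psi_value 0, BC_psi_value 1]
    norm_num
  refine ⟨⟨⟨outer BC_psi, outer BC_psi, hdens, hdens, rfl, hval.symm⟩, ?_⟩,
    outer BC_psi, outer BC_psi, hdens, hdens, rfl, BC_psi_ptrA, hval⟩
  rintro x ⟨σ0, σ1, h0, h1, hc, rfl⟩
  exact BC_upper σ0 σ1 h0 h1 hc

end
end

section
/- Consider the semidefinite program: maximize (1/2)·[(1/2)⟨φ₀|σ₀^{BC}|φ₀⟩ + (1/2)⟨φ₁|σ₁^{BC}|φ₁⟩] + (1/2)·⟨σ^{OT}, P_accept⟩ over density matrices σ₀^{BC}, σ₁^{BC} on ℂ³ ⊗ ℂ³, σ^{OT} on (ℂ²)^{⊗4}, and σ_B on ℂ³, subject to: Tr_A(σ₀^{BC}) = Tr_A(σ₁^{BC}) = σ_B, and Tr_{G₀,G₁}(σ^{OT}) = Tr_B(U₂(|ψ⟩⟨ψ| ⊗ σ_B)U₂†), where |ψ⟩ = (1/2)Σ_{x₀,x₁}|x₀x₁⟩,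 U₂ = Σ_{x₀,x₁}|x₀x₁⟩⟨x₀x₁| ⊗ diag((−1)^{x₀},(−1)^{x₁},1), and P_accept = Σ_{x₀,x₁}|x₀x₁⟩⟨x₀x₁| ⊗ |x₀x₁⟩⟨x₀x₁|. Its optimal value v satisfies 0.7285 ≤ v ≤ 0.7286; in particular v < 3/4, i.e., Alice's optimal cheating probability in the stochastic bit-commitment/oblivious-transfer switch protocol is strictly smaller than her optimal cheating probability (3/4) in either constituent protocol. -/
/-! STATEMENT 5: Alice's optimal cheating probability in the stochastic bit-commitment / oblivious-transfer switch protocol lies in [0.7285, 0.7286]; in particular it is strictly below 3/4. -/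

open Matrix
open scoped Matrix BigOperators ComplexOrder

noncomputable section

/-- |ψ⟩ = (1/2) Σ_{x₀,x₁} |x₀x₁⟩ ∈ X₀ ⊗ X₁. -/
def psiX : Fin 2 × Fin 2 → ℂ := fun _ => 1/2

/-- U_{x₀x₁} = diag((−1)^{x₀}, (−1)^{x₁}, 1) as a diagonal entry function. -/
def Udiag (x0 x1 : Fin 2) (b : Fin 3) : ℂ :=
  if b = 0 then (-1) ^ (x0 : ℕ) else if b = 1 then (-1) ^ (x1 : ℕ) else 1

/-- U₂ = Σ_{x₀,x₁} |x₀x₁⟩⟨x₀x₁| ⊗ U_{x₀x₁}, acting on X₀ ⊗ X₁ ⊗ B. -/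
def U2 : Mat (Fin 2 × Fin 2 × Fin 3) :=
  Matrix.diagonal fun p => Udiag p.1 p.2.1 p.2.2

/-- The state |ψ⟩⟨ψ| ⊗ σ_B on X₀ ⊗ X₁ ⊗ B. -/
def inState (σB : Mat (Fin 3)) : Mat (Fin 2 × Fin 2 × Fin 3) :=
  fun p q => outer psiX (p.1, p.2.1) (q.1, q.2.1) * σB p.2.2 q.2.2

/-- Partial trace over B, the last factor of X₀ ⊗ X₁ ⊗ B. -/
def trB (ρ : Mat (Fin 2 × Fin 2 × Fin 3)) : Mat (Fin 2 × Fin 2) :=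
  fun p q => ∑ b, ρ (p.1, p.2, b) (q.1, q.2, b)

/-- Partial trace over G₀ and G₁, the last two factors of X₀ ⊗ X₁ ⊗ G₀ ⊗ G₁. -/
def trG01 (σ : Mat (Fin 2 × Fin 2 × Fin 2 × Fin 2)) : Mat (Fin 2 × Fin 2) :=
  fun p q => ∑ g0, ∑ g1, σ (p.1, p.2, g0, g1) (q.1, q.2, g0, g1)

/-- P_accept = Σ_{x₀,x₁} |x₀x₁⟩⟨x₀x₁|_{X₀⊗X₁} ⊗ |x₀x₁⟩⟨x₀x₁|_{G₀⊗G₁}. -/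
def Pacc : Mat (Fin 2 × Fin 2 × Fin 2 × Fin 2) := fun p q =>
  match p, q with
  | (x0, x1, g0, g1), (x0', x1', g0', g1') =>
    ∑ u0 : Fin 2, ∑ u1 : Fin 2,
      ket (u0, u1) (x0, x1) * star (ket (u0, u1) (x0', x1')) *
      (ket (u0, u1) (g0, g1) * star (ket (u0, u1) (g0', g1')))

/-- The constraint Tr_{G₀,G₁}(σ) = Tr_B(U₂(|ψ⟩⟨ψ| ⊗ σ_B)U₂†). -/
def OTconstraint (σ : Mat (Fin 2 × Fin 2 × Fin 2 × Fin 2)) (σB : Mat (Fin 3)) : Prop :=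
  trG01 σ = trB (U2 * inState σB * U2ᴴ)

namespace BCOT


abbrev X4 : Type := Fin 2 × Fin 2
abbrev XG : Type := Fin 2 × Fin 2 × Fin 2 × Fin 2

def rC : ℂ := (Real.sqrt 2 : ℝ)

lemma hr2 : rC * rC = 2 := by
  rw [rC, ← Complex.ofReal_mul]
  norm_num [Real.mul_self_sqrt]

lemma hrsq : rC ^ 2 = 2 := by rw [sq]; exact hr2
lemma hrcube : rC ^ 3 = 2 * rC := by rw [pow_succ, hrsq]
lemma hrfour : rC ^ 4 = 4 := by rw [show 4 = 2 + 2 from rfl, pow_add, hrsq]; norm_num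
lemma hrne : rC ≠ 0 := by
  rw [rC]
  simp only [ne_eq, Complex.ofReal_eq_zero]
  positivity
lemma hrstar : star rC = rC := Complex.conj_ofReal _
lemma hrinv : rC⁻¹ = rC / 2 := by
  rw [eq_div_iff (two_ne_zero), inv_mul_eq_iff_eq_mul₀ hrne]
  exact hr2.symm

-- generic psd lemmas
lemma outer_psd {α : Type} [Fintype α] (v : α → ℂ) : (outer v).PosSemidef := by
  refine posSemidef_iff_dotProduct_mulVec.mpr ⟨?_, ?_⟩
  · ext i j; simp [outer, conjTranspose_apply, mul_comm]
  · intro x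
    have : star x ⬝ᵥ (outer v *ᵥ x) = star (star v ⬝ᵥ x) * (star v ⬝ᵥ x) := by
      simp only [dotProduct, mulVec, outer, Pi.star_apply, star_sum, star_mul', star_star,
        Finset.sum_mul, Finset.mul_sum]
      rw [Finset.sum_comm]
      exact Finset.sum_congr rfl fun i _ => Finset.sum_congr rfl fun j _ => by ring
    rw [this]
    exact star_mul_self_nonneg _

lemma outer_herm {α : Type} [Fintype α] (v : α → ℂ) : (outer v)ᴴ = outer v :=
  (outer_psd v).1

lemma psd_smul {α : Type} [Fintype α] {M : Mat α} (hM : M.PosSemidef) {c : ℝ} (hc : 0 ≤ c) :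
    ((c : ℂ) • M).PosSemidef := by
  refine posSemidef_iff_dotProduct_mulVec.mpr ⟨?_, ?_⟩
  · ext i j
    simp [conjTranspose_apply, hM.1.apply, Complex.ext_iff]
  · intro x
    rw [smul_mulVec, dotProduct_smul]
    exact smul_nonneg (Complex.zero_le_real.mpr hc) (hM.dotProduct_mulVec_nonneg x)

open scoped MatrixOrder in
lemma trace_mul_psd_nonneg {α : Type} [Fintype α] [DecidableEq α] {A B : Mat α}
    (hA : A.PosSemidef) (hB : B.PosSemidef) : 0 ≤ (A * B).trace := by
  obtain ⟨C, hC⟩ := CStarAlgebra.nonneg_iff_eq_star_mul_self.mp hB.nonneg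
  rw [star_eq_conjTranspose] at hC
  subst hC
  have h1 : (A * (Cᴴ * C)).trace = (C * A * Cᴴ).trace := by
    rw [← Matrix.mul_assoc, Matrix.trace_mul_cycle]
  rw [h1]
  have h2 : (C * A * Cᴴ).PosSemidef := hA.mul_mul_conjTranspose_same C
  rw [Matrix.trace]
  refine Finset.sum_nonneg fun i _ => ?_
  have := h2.dotProduct_mulVec_nonneg (Pi.single i 1)
  simpa [dotProduct, mulVec, Pi.single_apply] using this

lemma trace_outer_mul {α : Type} [Fintype α] (v : α → ℂ) (M : Mat α) :
    (outer v * M).trace = star v ⬝ᵥ (M *ᵥ v) := by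
  simp only [Matrix.trace, Matrix.diag, Matrix.mul_apply, outer, dotProduct, mulVec,
    Pi.star_apply]
  rw [Finset.sum_comm]
  refine Finset.sum_congr rfl fun q _ => ?_
  rw [Finset.mul_sum]
  exact Finset.sum_congr rfl fun p _ => by ring

lemma trace_vmv {α : Type} [Fintype α] (σ : Mat α) (u w : α → ℂ) :
    (σ * vecMulVec u w).trace = w ⬝ᵥ (σ *ᵥ u) := by
  simp only [Matrix.trace, Matrix.diag, Matrix.mul_apply, vecMulVec_apply, dotProduct, mulVec]
  refine Finset.sum_congr rfl fun p _ => ?_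
  rw [Finset.mul_sum]
  exact Finset.sum_congr rfl fun q _ => by ring

lemma trace_outer {α : Type} [Fintype α] (v : α → ℂ) : (outer v).trace = star v ⬝ᵥ v := by
  simp only [Matrix.trace, Matrix.diag, outer, dotProduct, Pi.star_apply]
  exact Finset.sum_congr rfl fun p _ => by ring


-- dual certificate data
lemma rC_def : (Real.sqrt 2 : ℂ) = rC := rfl

def Z0m : Mat (Fin 3) := Matrix.diagonal (fun b => if b = 0 then (1+rC)/8 else if b = 1 then 0 else (2+rC)/16)
def Z1m : Mat (Fin 3) := Matrix.diagonal (fun b => if b = 0 then 0 else if b = 1 then (1+rC)/8 else (2+rC)/16)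
def PhiY : Mat (Fin 3) := Matrix.diagonal (fun b => if b = 0 then (2+rC)/8 else if b = 1 then (2+rC)/8 else (1+rC)/8)
def Ym : Mat X4 := fun x y =>
  ((1+rC)/8 + (2+rC)/8 * (-1)^((x.1:ℕ)+(y.1:ℕ)) + (2+rC)/8 * (-1)^((x.2:ℕ)+(y.2:ℕ)))/4
def IZ {α β : Type} [DecidableEq α] (Z : Mat β) : Mat (α × β) :=
  fun p q => if p.1 = q.1 then Z p.2 q.2 else 0
def IY : Mat XG := fun p q => if p.2.2 = q.2.2 then Ym (p.1, p.2.1) (q.1, q.2.1) else 0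
def D0m : Mat (Fin 3 × Fin 3) := IZ Z0m - (4⁻¹ : ℂ) • outer (phi 0)
def D1m : Mat (Fin 3 × Fin 3) := IZ Z1m - (4⁻¹ : ℂ) • outer (phi 1)
def DYm : Mat XG := IY - (2⁻¹ : ℂ) • Pacc

def w00 : Fin 3 × Fin 3 → ℂ := fun p => if p = (0,0) then 1 else if p = (2,2) then -(rC/2) else 0
def w11 : Fin 3 × Fin 3 → ℂ := fun p => if p = (1,1) then 1 else if p = (2,2) then -(rC/2) else 0
def aR : ℝ := (1 + Real.sqrt 2)/8
def gR : ℝ := (2 + Real.sqrt 2)/16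
def sR : ℝ := Real.sqrt 2/8
lemma haR : (0:ℝ) ≤ aR := by rw [aR]; positivity
lemma hgR : (0:ℝ) ≤ gR := by rw [gR]; positivity
lemma hsR : (0:ℝ) ≤ sR := by rw [sR]; positivity
lemma haC : (aR : ℂ) = (1+rC)/8 := by rw [aR, rC]; push_cast; ring
lemma hgC : (gR : ℂ) = (2+rC)/16 := by rw [gR, rC]; push_cast; ring
lemma hsC : (sR : ℂ) = rC/8 := by rw [sR, rC]; push_cast; ring

set_option maxHeartbeats 4000000 in
lemma hD0 : D0m = (sR:ℂ) • outer w00 + (gR:ℂ) • outer (ket ((0:Fin 3),(2:Fin 3)))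
    + (aR:ℂ) • outer (ket ((1:Fin 3),(0:Fin 3))) + (gR:ℂ) • outer (ket ((1:Fin 3),(2:Fin 3)))
    + (aR:ℂ) • outer (ket ((2:Fin 3),(0:Fin 3))) := by
  apply Matrix.ext
  intro ⟨pa, pb⟩ ⟨qa, qb⟩
  simp only [D0m, IZ, Z0m, outer, phi, ket, f23, w00, haC, hgC, hsC, Matrix.sub_apply,
      Matrix.add_apply, Matrix.smul_apply, smul_eq_mul, rC_def, div_eq_mul_inv, hrinv,
      Matrix.diagonal_apply, Prod.mk.injEq]
  fin_cases pa <;> fin_cases pb <;> fin_cases qa <;> fin_cases qb <;>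
    simp (config := {decide := true}) only [star_zero, star_one, hrstar, star_mul', star_add,
      star_ofNat, star_neg, if_true, if_false, star_inv₀, reduceIte, Prod.mk.injEq] <;>
    ring_nf <;>
    try simp only [hrsq, hrcube, hrfour] <;> try ring_nf
  all_goals norm_num [hrstar]

set_option maxHeartbeats 4000000 in
lemma hD1 : D1m = (sR:ℂ) • outer w11 + (gR:ℂ) • outer (ket ((0:Fin 3),(2:Fin 3)))
    + (aR:ℂ) • outer (ket ((0:Fin 3),(1:Fin 3))) + (gR:ℂ) • outer (ket ((1:Fin 3),(2:Fin 3)))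
    + (aR:ℂ) • outer (ket ((2:Fin 3),(1:Fin 3))) := by
  apply Matrix.ext
  intro ⟨pa, pb⟩ ⟨qa, qb⟩
  simp only [D1m, IZ, Z1m, outer, phi, ket, f23, w11, haC, hgC, hsC, Matrix.sub_apply,
      Matrix.add_apply, Matrix.smul_apply, smul_eq_mul, rC_def, div_eq_mul_inv, hrinv,
      Matrix.diagonal_apply, Prod.mk.injEq]
  fin_cases pa <;> fin_cases pb <;> fin_cases qa <;> fin_cases qb <;>
    simp (config := {decide := true}) only [star_zero, star_one, hrstar, star_mul', star_add,
      star_ofNat, star_neg, if_true, if_false, star_inv₀, reduceIte, Prod.mk.injEq] <;>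
    ring_nf <;>
    try simp only [hrsq, hrcube, hrfour] <;> try ring_nf
  all_goals norm_num [hrstar]

-- data for the OT certificate
def tb (a b c d : ℂ) : X4 → ℂ := fun x =>
  if x = (0,0) then a else if x = (0,1) then b else if x = (1,0) then c else d
def gv (g : X4) (t : X4 → ℂ) : XG → ℂ := fun p => if p.2.2 = g then t (p.1, p.2.1) else 0
def mker (g : X4) : XG → ℂ := gv g (tb 1 (-1) (-1) 1)
def rv (g : X4) : X4 → X4 → ℂ := fun _ => 0
def rvv : X4 → XG → ℂ := fun g => gv g (
  if g = (0,0) then tb (-7/64) (-1/64) (-1/64) (1/64)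
  else if g = (0,1) then tb (1/64) (7/64) (-1/64) (1/64)
  else if g = (1,0) then tb (1/64) (-1/64) (7/64) (1/64)
  else tb (1/64) (-1/64) (-1/64) (-7/64))
def w1 : XG → ℂ := gv (0,0) (tb 1 (-1-rC) (-1-rC) (-3-2*rC))
def w2 : XG → ℂ := gv (0,1) (tb 1 (7-5*rC) (-1+rC) (5-4*rC))
def w3 : XG → ℂ := gv (1,0) (tb 1 (-1+rC) (7-5*rC) (5-4*rC))
def w4 : XG → ℂ := gv (1,1) (tb 1 (-1+rC) (-1+rC) (-3+2*rC))
def w5 : XG → ℂ := gv (0,0) (tb 0 1 (-1) 0)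
def w6 : XG → ℂ := gv (0,1) (tb 0 1 (-3-2*rC) (-2-2*rC))
def w7 : XG → ℂ := gv (1,0) (tb 0 1 (-3+2*rC) (-2+2*rC))
def w8 : XG → ℂ := gv (1,1) (tb 0 1 (-1) 0)
def d1R : ℝ := (3*Real.sqrt 2 - 4)/32
def d2R : ℝ := (4 + 3*Real.sqrt 2)/32
def d5R : ℝ := (2 + Real.sqrt 2)/16
def d6R : ℝ := (10 - 7*Real.sqrt 2)/16
lemma hd1R : (0:ℝ) ≤ d1R := by
  rw [d1R]
  nlinarith [Real.sq_sqrt (by norm_num : (0:ℝ) ≤ 2), Real.sqrt_nonneg 2]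
lemma hd2R : (0:ℝ) ≤ d2R := by rw [d2R]; positivity
lemma hd5R : (0:ℝ) ≤ d5R := by rw [d5R]; positivity
lemma hd6R : (0:ℝ) ≤ d6R := by
  rw [d6R]
  nlinarith [Real.sq_sqrt (by norm_num : (0:ℝ) ≤ 2), Real.sqrt_nonneg 2]
lemma hd1C : (d1R : ℂ) = (3*rC-4)/32 := by rw [d1R, rC]; push_cast; ring
lemma hd2C : (d2R : ℂ) = (4+3*rC)/32 := by rw [d2R, rC]; push_cast; ring
lemma hd5C : (d5R : ℂ) = (2+rC)/16 := by rw [d5R, rC]; push_cast; ring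
lemma hd6C : (d6R : ℂ) = (10-7*rC)/16 := by rw [d6R, rC]; push_cast; ring

def Esum : Mat XG :=
  (d1R:ℂ) • outer w1 + (d2R:ℂ) • (outer w2 + outer w3 + outer w4)
  + (d5R:ℂ) • (outer w5 + outer w7 + outer w8) + (d6R:ℂ) • outer w6

lemma hEsum_psd : Esum.PosSemidef := by
  refine (((psd_smul (outer_psd w1) hd1R).add (psd_smul (((outer_psd w2).add
    (outer_psd w3)).add (outer_psd w4)) hd2R)).add (psd_smul (((outer_psd w5).add
    (outer_psd w7)).add (outer_psd w8)) hd5R)).add (psd_smul (outer_psd w6) hd6R)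

def Kmat : Mat XG := ∑ g : X4, (vecMulVec (mker g) (rvv g) + vecMulVec (rvv g) (mker g))

set_option maxHeartbeats 16000000 in
lemma hDY : DYm = Esum + Kmat := by
  apply Matrix.ext
  intro ⟨p0, p1, p2, p3⟩ ⟨q0, q1, q2, q3⟩
  fin_cases p0 <;> fin_cases p1 <;> fin_cases p2 <;> fin_cases p3 <;>
    fin_cases q0 <;> fin_cases q1 <;> fin_cases q2 <;> fin_cases q3 <;>
    · simp (config := {decide := true}) only [DYm, IY, Ym, Pacc, ket, Esum, Kmat, outer, gv, tb,
        mker, rvv, w1, w2, w3, w4, w5, w6, w7, w8, hd1C, hd2C, hd5C, hd6C,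
        Matrix.sub_apply, Matrix.add_apply, Matrix.smul_apply, smul_eq_mul,
        vecMulVec_apply, Finset.sum_apply, Fintype.sum_prod_type, Fin.sum_univ_two,
        Prod.mk.injEq, star_zero, star_one, hrstar, star_mul', star_add, star_sub,
        star_ofNat, star_neg, if_true, if_false, reduceIte, Pi.add_apply]
      ring_nf
      try simp only [hrsq, hrcube, hrfour]
      try ring_nf
      try norm_num

-- trace rearrangement lemmas
set_option maxHeartbeats 2000000 in
lemma trace_IZ3 (Z : Mat (Fin 3)) (σ : Mat (Fin 3 × Fin 3)) :
    (IZ Z * σ).trace = (Z * ptrA σ).trace := by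
  simp (config := {decide := true}) only [Matrix.trace, Matrix.diag, Matrix.mul_apply, IZ, ptrA,
    Fintype.sum_prod_type, Fin.sum_univ_three, Prod.mk.injEq, if_true, if_false, reduceIte]
  norm_num
  ring

set_option maxHeartbeats 2000000 in
lemma trace_IY (σ : Mat XG) : (IY * σ).trace = (Ym * trG01 σ).trace := by
  simp (config := {decide := true}) only [Matrix.trace, Matrix.diag, Matrix.mul_apply, IY, trG01,
    Fintype.sum_prod_type, Fin.sum_univ_two, Prod.mk.injEq, if_true, if_false, reduceIte]
  norm_num
  ring

lemma hU2H : U2ᴴ = U2 := by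
  rw [U2, Matrix.diagonal_conjTranspose]
  have h : (star fun p : Fin 2 × Fin 2 × Fin 3 => Udiag p.1 p.2.1 p.2.2)
      = fun p : Fin 2 × Fin 2 × Fin 3 => Udiag p.1 p.2.1 p.2.2 := by
    funext p
    simp only [Pi.star_apply, Udiag]
    split_ifs <;> simp
  rw [h]

lemma hmker_star (g : X4) : star (mker g) = mker g := by
  funext p
  simp only [Pi.star_apply, mker, gv, tb]
  split_ifs <;> simp

set_option maxHeartbeats 8000000 in
lemma ker_sum (σ : Mat XG) (σB : Mat (Fin 3)) (h : OTconstraint σ σB) :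
    ∑ g : X4, star (mker g) ⬝ᵥ (σ *ᵥ mker g) = 0 := by
  have h1 : ∑ g : X4, star (mker g) ⬝ᵥ (σ *ᵥ mker g)
      = ∑ x : X4, ∑ y : X4,
        (-1:ℂ)^((x.1:ℕ)+(x.2:ℕ)+(y.1:ℕ)+(y.2:ℕ)) * trG01 σ x y := by
    simp (config := {decide := true}) only [dotProduct, mulVec, mker, gv, tb, trG01,
      Pi.star_apply, Fintype.sum_prod_type, Fin.sum_univ_two, Prod.mk.injEq, star_zero,
      star_one, star_neg, if_true, if_false, reduceIte]
    norm_num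
    ring
  rw [h1, show trG01 σ = trB (U2 * inState σB * U2ᴴ) from h, hU2H]
  simp (config := {decide := true}) only [trB, inState, U2, Matrix.diagonal_mul,
    Matrix.mul_diagonal, Udiag, psiX, outer, star_one, star_div₀, star_ofNat, star_neg, star_pow,
    Fintype.sum_prod_type, Fin.sum_univ_two, Fin.sum_univ_three, Prod.mk.injEq,
    if_true, if_false, reduceIte]
  norm_num
  ring

lemma hker {σ : Mat XG} {σB : Mat (Fin 3)} (hψ : σ.PosSemidef) (h : OTconstraint σ σB) :
    ∀ g : X4, σ *ᵥ mker g = 0 := by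
  intro g
  have hsum := ker_sum σ σB h
  have hnn : ∀ g ∈ (Finset.univ : Finset X4), 0 ≤ star (mker g) ⬝ᵥ (σ *ᵥ mker g) :=
    fun g _ => hψ.dotProduct_mulVec_nonneg _
  have h0 := (Finset.sum_eq_zero_iff_of_nonneg hnn).mp hsum g (Finset.mem_univ g)
  exact (hψ.dotProduct_mulVec_zero_iff _).mp h0

lemma trace_K_zero {σ : Mat XG} (hherm : σᴴ = σ) (hk : ∀ g : X4, σ *ᵥ mker g = 0) :
    (σ * Kmat).trace = 0 := by
  rw [Kmat, Matrix.mul_sum, Matrix.trace_sum]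
  refine Finset.sum_eq_zero fun g _ => ?_
  rw [Matrix.mul_add, Matrix.trace_add, trace_vmv, trace_vmv, hk g, dotProduct_zero,
    Matrix.dotProduct_mulVec]
  have hvm : mker g ᵥ* σ = 0 := by
    have h1 : star (σ *ᵥ mker g) = star (mker g) ᵥ* σᴴ := Matrix.star_mulVec σ (mker g)
    rw [hk g, hherm, hmker_star, star_zero] at h1
    exact h1.symm
  rw [hvm, zero_dotProduct, add_zero]

set_option maxHeartbeats 4000000 in
lemma trace_I3 (σB : Mat (Fin 3)) :
    (Ym * trB (U2 * inState σB * U2ᴴ)).trace = (PhiY * σB).trace := by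
  rw [hU2H]
  simp (config := {decide := true}) only [Matrix.trace, Matrix.diag, Matrix.mul_apply, trB,
    inState, U2, PhiY, Ym, Matrix.diagonal_mul, Matrix.mul_diagonal, Matrix.diagonal_apply,
    Udiag, psiX, outer, star_one, star_div₀, star_ofNat, star_neg, star_pow,
    Fintype.sum_prod_type, Fin.sum_univ_two, Fin.sum_univ_three, Prod.mk.injEq,
    if_true, if_false, reduceIte]
  norm_num
  ring

lemma hZsum : Z0m + Z1m + PhiY = ((3 + 2*rC)/8) • (1 : Mat (Fin 3)) := by
  apply Matrix.ext
  intro p q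
  fin_cases p <;> fin_cases q <;>
    simp (config := {decide := true}) only [Z0m, Z1m, PhiY, Matrix.add_apply,
      Matrix.diagonal_apply, Matrix.smul_apply, Matrix.one_apply, smul_eq_mul,
      if_true, if_false, reduceIte] <;>
    ring

-- primal witness
def sBm : Mat (Fin 3) :=
  Matrix.diagonal (fun b => if b = 0 then 4⁻¹ else if b = 1 then 4⁻¹ else 2⁻¹)
def v0v : Fin 3 × Fin 3 → ℂ := fun p => if p = (0,0) then 2⁻¹ else if p = (2,2) then rC/2 else 0
def v1v : Fin 3 × Fin 3 → ℂ := fun p => if p = (1,1) then 2⁻¹ else if p = (2,2) then rC/2 else 0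
def sig0 : Mat (Fin 3 × Fin 3) :=
  outer v0v + ((4⁻¹:ℝ):ℂ) • outer (ket ((1:Fin 3),(1:Fin 3)))
def sig1 : Mat (Fin 3 × Fin 3) :=
  outer v1v + ((4⁻¹:ℝ):ℂ) • outer (ket ((0:Fin 3),(0:Fin 3)))
def Psi : XG → ℂ := fun p =>
  (rC/2 + (-1:ℂ)^((p.1:ℕ)+(p.2.2.1:ℕ))/2 + (-1:ℂ)^((p.2.1:ℕ)+(p.2.2.2:ℕ))/2)/4
def sOT : Mat XG := outer Psi

lemma hsig0_psd : sig0.PosSemidef :=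
  (outer_psd v0v).add (psd_smul (outer_psd _) (by norm_num))
lemma hsig1_psd : sig1.PosSemidef :=
  (outer_psd v1v).add (psd_smul (outer_psd _) (by norm_num))
lemma hsOT_psd : sOT.PosSemidef := outer_psd Psi

lemma hsBm_density : IsDensity sBm := by
  constructor
  · refine Matrix.PosSemidef.diagonal (Pi.le_def.mpr fun b => ?_)
    rw [Pi.zero_apply]
    fin_cases b <;>
      simp (config := {decide := true}) only [if_true, if_false, reduceIte] <;>
      · first
        | (rw [show (4⁻¹:ℂ) = ((4⁻¹:ℝ):ℂ) by norm_num]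
           exact Complex.zero_le_real.mpr (by norm_num))
        | (rw [show (2⁻¹:ℂ) = ((2⁻¹:ℝ):ℂ) by norm_num]
           exact Complex.zero_le_real.mpr (by norm_num))
  · rw [sBm, Matrix.trace_diagonal]
    simp (config := {decide := true}) only [Fin.sum_univ_three, if_true, if_false, reduceIte]
    norm_num

lemma hsig0_density : IsDensity sig0 := by
  refine ⟨hsig0_psd, ?_⟩
  rw [sig0, Matrix.trace_add, Matrix.trace_smul, trace_outer, trace_outer]
  simp (config := {decide := true}) only [v0v, ket, dotProduct, Pi.star_apply,
    Fintype.sum_prod_type, Fin.sum_univ_three, Prod.mk.injEq, if_true, if_false, reduceIte,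
    star_zero, star_one, star_div₀, star_ofNat, hrstar, star_inv₀]
  ring_nf
  try simp only [hrsq, hrcube, hrfour]
  try norm_num
  try ring

lemma hsig1_density : IsDensity sig1 := by
  refine ⟨hsig1_psd, ?_⟩
  rw [sig1, Matrix.trace_add, Matrix.trace_smul, trace_outer, trace_outer]
  simp (config := {decide := true}) only [v1v, ket, dotProduct, Pi.star_apply,
    Fintype.sum_prod_type, Fin.sum_univ_three, Prod.mk.injEq, if_true, if_false, reduceIte,
    star_zero, star_one, star_div₀, star_ofNat, hrstar, star_inv₀]
  ring_nf
  try simp only [hrsq, hrcube, hrfour]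
  try norm_num
  try ring

set_option maxHeartbeats 4000000 in
lemma hsOT_density : IsDensity sOT := by
  refine ⟨hsOT_psd, ?_⟩
  rw [sOT, trace_outer]
  simp (config := {decide := true}) only [Psi, dotProduct, Pi.star_apply,
    Fintype.sum_prod_type, Fin.sum_univ_two, star_zero, star_one, star_div₀, star_ofNat,
    hrstar, star_add, star_neg, star_pow, star_mul']
  norm_num
  ring_nf
  try simp only [hrsq, hrcube, hrfour]
  try norm_num
  try ring

set_option maxHeartbeats 4000000 in
lemma hptr0 : ptrA sig0 = sBm := by
  apply Matrix.ext
  intro p q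
  fin_cases p <;> fin_cases q <;>
    · simp (config := {decide := true}) only [ptrA, sig0, sBm, outer, v0v, ket,
        Matrix.add_apply, Matrix.smul_apply, Matrix.diagonal_apply, smul_eq_mul,
        Fin.sum_univ_three, Prod.mk.injEq, if_true, if_false, reduceIte, star_zero, star_one,
        star_div₀, star_ofNat, hrstar, star_inv₀]
      try ring_nf
      try simp only [hrsq, hrcube, hrfour]
      try norm_num
      try ring

set_option maxHeartbeats 4000000 in
lemma hptr1 : ptrA sig1 = sBm := by
  apply Matrix.ext
  intro p q
  fin_cases p <;> fin_cases q <;>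
    · simp (config := {decide := true}) only [ptrA, sig1, sBm, outer, v1v, ket,
        Matrix.add_apply, Matrix.smul_apply, Matrix.diagonal_apply, smul_eq_mul,
        Fin.sum_univ_three, Prod.mk.injEq, if_true, if_false, reduceIte, star_zero, star_one,
        star_div₀, star_ofNat, hrstar, star_inv₀]
      try ring_nf
      try simp only [hrsq, hrcube, hrfour]
      try norm_num
      try ring

set_option maxHeartbeats 16000000 in
lemma hOTw : OTconstraint sOT sBm := by
  rw [OTconstraint, hU2H]
  apply Matrix.ext
  intro ⟨x0, x1⟩ ⟨y0, y1⟩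
  fin_cases x0 <;> fin_cases x1 <;> fin_cases y0 <;> fin_cases y1 <;>
    · simp (config := {decide := true}) only [trG01, trB, sOT, outer, Psi, inState, psiX, U2,
        sBm, Udiag, Matrix.diagonal_mul, Matrix.mul_diagonal, Matrix.diagonal_apply,
        Fin.sum_univ_two, Fin.sum_univ_three, Prod.mk.injEq, if_true, if_false, reduceIte,
        star_zero, star_one, star_div₀, star_ofNat, hrstar, star_add, star_neg, star_pow,
        star_mul']
      norm_num
      try ring_nf
      try simp only [hrsq, hrcube, hrfour]
      try norm_num
      try ring

set_option maxHeartbeats 4000000 in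
lemma hhs0 : hs (outer (phi 0)) sig0 = (3+2*rC)/8 := by
  rw [hs, outer_herm, trace_outer_mul]
  simp (config := {decide := true}) only [sig0, outer, v0v, phi, ket, f23, rC_def,
    div_eq_mul_inv, hrinv, mulVec, dotProduct, Matrix.add_apply, Matrix.smul_apply,
    smul_eq_mul, Pi.star_apply, Fintype.sum_prod_type, Fin.sum_univ_three, Prod.mk.injEq,
    if_true, if_false, reduceIte, star_zero, star_one, star_div₀, star_ofNat, hrstar,
    star_add, star_mul', star_inv₀]
  ring_nf
  simp only [hrsq, hrcube, hrfour]
  ring_nf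
  try simp only [hrsq, hrcube, hrfour]
  try norm_num
  try ring

set_option maxHeartbeats 4000000 in
lemma hhs1 : hs (outer (phi 1)) sig1 = (3+2*rC)/8 := by
  rw [hs, outer_herm, trace_outer_mul]
  simp (config := {decide := true}) only [sig1, outer, v1v, phi, ket, f23, rC_def,
    div_eq_mul_inv, hrinv, mulVec, dotProduct, Matrix.add_apply, Matrix.smul_apply,
    smul_eq_mul, Pi.star_apply, Fintype.sum_prod_type, Fin.sum_univ_three, Prod.mk.injEq,
    if_true, if_false, reduceIte, star_zero, star_one, star_div₀, star_ofNat, hrstar,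
    star_add, star_mul', star_inv₀]
  ring_nf
  simp only [hrsq, hrcube, hrfour]
  ring_nf
  try simp only [hrsq, hrcube, hrfour]
  try norm_num
  try ring

set_option maxHeartbeats 16000000 in
lemma hhsOT : hs sOT Pacc = (3+2*rC)/8 := by
  rw [hs, sOT, outer_herm, trace_outer_mul]
  simp (config := {decide := true}) only [Pacc, ket, Psi, mulVec, dotProduct, Pi.star_apply,
    Fintype.sum_prod_type, Fin.sum_univ_two, Prod.mk.injEq, if_true, if_false, reduceIte,
    star_zero, star_one, star_div₀, star_ofNat, hrstar, star_add, star_neg, star_pow,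
    star_mul']
  norm_num
  ring_nf
  try simp only [hrsq, hrcube, hrfour]
  try norm_num
  try ring

def vR : ℝ := (3 + 2*Real.sqrt 2)/8
lemma hvC : ((vR:ℝ):ℂ) = (3+2*rC)/8 := by rw [vR, rC]; push_cast; ring

lemma hv_lb : (0.7285:ℝ) ≤ vR := by
  rw [vR]
  nlinarith [Real.sq_sqrt (by norm_num : (0:ℝ) ≤ 2), Real.sqrt_nonneg 2,
    sq_nonneg (Real.sqrt 2 - 1.414)]
lemma hv_ub : vR ≤ (0.7286:ℝ) := by
  rw [vR]
  nlinarith [Real.sq_sqrt (by norm_num : (0:ℝ) ≤ 2), Real.sqrt_nonneg 2,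
    sq_nonneg (Real.sqrt 2 - 1.4143)]
lemma hv_34 : vR < 3/4 := by
  rw [vR]
  nlinarith [Real.sq_sqrt (by norm_num : (0:ℝ) ≤ 2), Real.sqrt_nonneg 2,
    sq_nonneg (Real.sqrt 2 - 1.4143)]

lemma hD0psd : D0m.PosSemidef := by
  rw [hD0]
  exact ((((psd_smul (outer_psd _) hsR).add (psd_smul (outer_psd _) hgR)).add
    (psd_smul (outer_psd _) haR)).add (psd_smul (outer_psd _) hgR)).add
    (psd_smul (outer_psd _) haR)
lemma hD1psd : D1m.PosSemidef := by
  rw [hD1]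
  exact ((((psd_smul (outer_psd _) hsR).add (psd_smul (outer_psd _) hgR)).add
    (psd_smul (outer_psd _) haR)).add (psd_smul (outer_psd _) hgR)).add
    (psd_smul (outer_psd _) haR)

lemma upper_bound {σ0 σ1 : Mat (Fin 3 × Fin 3)} {σOT : Mat XG} {σB : Mat (Fin 3)}
    (h0 : IsDensity σ0) (h1 : IsDensity σ1) (hOTd : IsDensity σOT) (hB : IsDensity σB)
    (hp0 : ptrA σ0 = σB) (hp1 : ptrA σ1 = σB) (hc : OTconstraint σOT σB) :
    ((1/2 : ℂ) * ((1/2 : ℂ) * hs (outer (phi 0)) σ0 + (1/2 : ℂ) * hs (outer (phi 1)) σ1)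
      + (1/2 : ℂ) * hs σOT Pacc).re ≤ vR := by
  have key0 : (4⁻¹:ℂ) * hs (outer (phi 0)) σ0 ≤ (Z0m * σB).trace := by
    have hnn : 0 ≤ (D0m * σ0).trace := trace_mul_psd_nonneg hD0psd h0.1
    have hexp : (D0m * σ0).trace = (Z0m * σB).trace - 4⁻¹ * hs (outer (phi 0)) σ0 := by
      rw [D0m, Matrix.sub_mul, Matrix.trace_sub, Matrix.smul_mul, Matrix.trace_smul,
        trace_IZ3, hp0, hs, outer_herm]
      simp only [smul_eq_mul]
    rw [hexp] at hnn
    exact sub_nonneg.mp hnn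
  have key1 : (4⁻¹:ℂ) * hs (outer (phi 1)) σ1 ≤ (Z1m * σB).trace := by
    have hnn : 0 ≤ (D1m * σ1).trace := trace_mul_psd_nonneg hD1psd h1.1
    have hexp : (D1m * σ1).trace = (Z1m * σB).trace - 4⁻¹ * hs (outer (phi 1)) σ1 := by
      rw [D1m, Matrix.sub_mul, Matrix.trace_sub, Matrix.smul_mul, Matrix.trace_smul,
        trace_IZ3, hp1, hs, outer_herm]
      simp only [smul_eq_mul]
    rw [hexp] at hnn
    exact sub_nonneg.mp hnn
  have hherm : σOTᴴ = σOT := hOTd.1.1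
  have keyOT : (2⁻¹:ℂ) * hs σOT Pacc ≤ (PhiY * σB).trace := by
    have hnn : 0 ≤ (σOT * Esum).trace := trace_mul_psd_nonneg hOTd.1 hEsum_psd
    have hK : (σOT * Kmat).trace = 0 := trace_K_zero hherm (hker hOTd.1 hc)
    have h2 : (σOT * DYm).trace = (σOT * Esum).trace := by
      rw [hDY, Matrix.mul_add, Matrix.trace_add, hK, add_zero]
    have hexp : (σOT * DYm).trace = (PhiY * σB).trace - 2⁻¹ * hs σOT Pacc := by
      rw [DYm, Matrix.mul_sub, Matrix.trace_sub, Matrix.mul_smul, Matrix.trace_smul,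
        Matrix.trace_mul_comm σOT IY, trace_IY, hc, trace_I3, hs, hherm]
      simp only [smul_eq_mul]
    have hnn' : 0 ≤ (PhiY * σB).trace - 2⁻¹ * hs σOT Pacc := by
      rw [← hexp, h2]; exact hnn
    exact sub_nonneg.mp hnn'
  have hsum := add_le_add (add_le_add key0 key1) keyOT
  have hsumB : (Z0m*σB).trace + (Z1m*σB).trace + (PhiY*σB).trace = ((3+2*rC)/8 : ℂ) := by
    rw [← Matrix.trace_add, ← Matrix.trace_add, ← Matrix.add_mul, ← Matrix.add_mul, hZsum,
      Matrix.smul_mul, Matrix.trace_smul, Matrix.one_mul, hB.2, smul_eq_mul, mul_one]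
  have hfinal : (1/2 : ℂ) * ((1/2 : ℂ) * hs (outer (phi 0)) σ0
      + (1/2 : ℂ) * hs (outer (phi 1)) σ1) + (1/2 : ℂ) * hs σOT Pacc ≤ ((3+2*rC)/8 : ℂ) := by
    have hobj : (1/2 : ℂ) * ((1/2 : ℂ) * hs (outer (phi 0)) σ0
        + (1/2 : ℂ) * hs (outer (phi 1)) σ1) + (1/2 : ℂ) * hs σOT Pacc
        = 4⁻¹ * hs (outer (phi 0)) σ0 + 4⁻¹ * hs (outer (phi 1)) σ1
          + 2⁻¹ * hs σOT Pacc := by ring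
    rw [hobj, ← hsumB]
    exact hsum
  have hre := (Complex.le_def.mp hfinal).1
  calc ((1/2 : ℂ) * ((1/2 : ℂ) * hs (outer (phi 0)) σ0 + (1/2 : ℂ) * hs (outer (phi 1)) σ1)
      + (1/2 : ℂ) * hs σOT Pacc).re
      ≤ (((3+2*rC)/8 : ℂ)).re := hre
    _ = vR := by rw [← hvC, Complex.ofReal_re]

lemma hmem_val :
    ((1/2 : ℂ) * ((1/2 : ℂ) * hs (outer (phi 0)) sig0 + (1/2 : ℂ) * hs (outer (phi 1)) sig1)
      + (1/2 : ℂ) * hs sOT Pacc).re = vR := by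
  rw [hhs0, hhs1, hhsOT,
    show ((1/2:ℂ)*((1/2:ℂ)*((3+2*rC)/8) + (1/2:ℂ)*((3+2*rC)/8)) + (1/2:ℂ)*((3+2*rC)/8))
      = ((3+2*rC)/8) by ring, ← hvC, Complex.ofReal_re]

end BCOT


theorem bc_ot_switch_cheating_Alice :
    ∃ v : ℝ,
      IsLUB
        {x : ℝ | ∃ (σ0 σ1 : Mat (Fin 3 × Fin 3))
            (σOT : Mat (Fin 2 × Fin 2 × Fin 2 × Fin 2)) (σB : Mat (Fin 3)),
          IsDensity σ0 ∧ IsDensity σ1 ∧ IsDensity σOT ∧ IsDensity σB ∧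
          ptrA σ0 = σB ∧ ptrA σ1 = σB ∧ OTconstraint σOT σB ∧
          x = ((1/2 : ℂ) * ((1/2 : ℂ) * hs (outer (phi 0)) σ0
                + (1/2 : ℂ) * hs (outer (phi 1)) σ1)
              + (1/2 : ℂ) * hs σOT Pacc).re}
        v
      ∧ (0.7285 : ℝ) ≤ v ∧ v ≤ (0.7286 : ℝ) ∧ v < 3/4 := by
  refine ⟨BCOT.vR, ⟨?_, ?_⟩, BCOT.hv_lb, BCOT.hv_ub, BCOT.hv_34⟩
  · rintro x ⟨σ0, σ1, σOT, σB, h0, h1, hOTd, hB, hp0, hp1, hc, rfl⟩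
    exact BCOT.upper_bound h0 h1 hOTd hB hp0 hp1 hc
  · intro w hw
    exact hw ⟨BCOT.sig0, BCOT.sig1, BCOT.sOT, BCOT.sBm, BCOT.hsig0_density,
      BCOT.hsig1_density, BCOT.hsOT_density, BCOT.hsBm_density, BCOT.hptr0, BCOT.hptr1,
      BCOT.hOTw, BCOT.hmem_val.symm⟩

end
end
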